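/- Fix n ≥ 1 and ρ ∈ (0,1]. For m ∈ (−1/2, 1/2), define the graphon W_m : [0,1]² → [0,1] by W_m(x,y) = 3/4 if (x ≤ 1/2 + m and y ≤ 1/2 + m) or (x > 1/2 + m and y > 1/2 + m), and W_m(x,y) = 1/4 otherwise, and let P_m denote the law of the adjacency matrix A under the sampling model with graphon W_m and sparsity ρ. Then for every Δ ∈ (0, 1/2), the Kullback–Leibler divergence satisfies KL(P_Δ ‖ P_0) ≤ 16·n·Δ². -/

import Mathlib

open MeasureTheory

/-- The uniform probability measure on `[0,1]`. -/
noncomputable def unif01 : Measure ℝ := volume.restrict (Set.Icc (0:ℝ) 1)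

/-- Law of `n` i.i.d. uniform random variables on `[0,1]`. -/
noncomputable def Pxi (n : ℕ) : Measure (Fin n → ℝ) := Measure.pi fun _ => unif01

/-- The canonical probability space of the graphon sampling model: the first coordinate
carries the `n` i.i.d. uniform sample points, the second coordinate carries an independent
array of i.i.d. uniform variables used to generate the Bernoulli edge indicators. -/
noncomputable def Pg (n : ℕ) : Measure ((Fin n → ℝ) × (Fin n → Fin n → ℝ)) :=
  (Pxi n).prod (Measure.pi fun _ : Fin n => Measure.pi fun _ : Fin n => unif01)

/-- The order statistics of `ξ`: `sortedVec ξ i` is the `(i+1)`-st smallest value of `ξ`. -/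
noncomputable def sortedVec {n : ℕ} (ξ : Fin n → ℝ) : Fin n → ℝ := ξ ∘ ⇑(Tuple.sort ξ)

/-- The weight matrix `Q` with `Q i j = ρ · W(ξ₍ᵢ₎, ξ₍ⱼ₎)` (order statistics of `ξ`). -/
noncomputable def Qmat (n : ℕ) (W : ℝ → ℝ → ℝ) (ρ : ℝ) (ξ : Fin n → ℝ) :
    Matrix (Fin n) (Fin n) ℝ :=
  Matrix.of fun i j => ρ * W (sortedVec ξ i) (sortedVec ξ j)

/-- The adjacency matrix sampled from the graphon model: given the uniforms `ω.2`,
`A i j = 1` iff `ω.2 i j ≤ Q i j` (for `i < j`, symmetrized, zero diagonal), so that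
conditionally on `ξ = ω.1` the entries `A i j`, `i < j`, are independent `Bernoulli (Q i j)`. -/
noncomputable def Amat (n : ℕ) (W : ℝ → ℝ → ℝ) (ρ : ℝ)
    (ω : (Fin n → ℝ) × (Fin n → Fin n → ℝ)) : Matrix (Fin n) (Fin n) ℝ :=
  Matrix.of fun i j =>
    if i = j then 0
    else if i < j then (if ω.2 i j ≤ Qmat n W ρ ω.1 i j then 1 else 0)
    else (if ω.2 j i ≤ Qmat n W ρ ω.1 j i then 1 else 0)

/-- The number of singular values of `M` (square roots of eigenvalues of `Mᵀ M`,
counted with multiplicity) that are `≥ t`. -/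
noncomputable def svCount {n : ℕ} (M : Matrix (Fin n) (Fin n) ℝ) (t : ℝ) : ℕ :=
  (Finset.univ.filter fun i : Fin n =>
    t ≤ Real.sqrt ((show (M.transpose * M).IsHermitian by
      rw [← Matrix.conjTranspose_eq_transpose_of_trivial]
      exact Matrix.isHermitian_conjTranspose_mul_self M).eigenvalues i)).card

/-- Kullback–Leibler divergence between two finitely-supported measures, computed atom by atom,
with the convention `0 · log 0 = 0`. -/
noncomputable def KLfin {α : Type*} [MeasurableSpace α] (P Q : Measure α) : ℝ :=
  ∑' a : α, (P {a}).toReal * Real.log ((P {a}).toReal / (Q {a}).toReal)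

/-- The two-community graphon `W_m` used in the lower bound: `W_m = 3/4` on the diagonal
blocks split at `1/2 + m` and `1/4` off-diagonal. -/
noncomputable def Wm (m : ℝ) (x y : ℝ) : ℝ :=
  if (x ≤ 1/2 + m ∧ y ≤ 1/2 + m) ∨ (1/2 + m < x ∧ 1/2 + m < y) then 3/4 else 1/4

-- ### auxiliary definitions

abbrev PairIdx (n : ℕ) := {p : Fin n × Fin n // p.1 < p.2}

noncomputable def thv (ρ : ℝ) (k : ℕ) {n : ℕ} (i j : Fin n) : ℝ :=
  ρ * (if ((i:ℕ) < k ↔ (j:ℕ) < k) then 3/4 else 1/4)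

noncomputable def Kcnt {n : ℕ} (t : ℝ) (ξ : Fin n → ℝ) : ℕ := (Finset.univ.filter fun i => ξ i ≤ t).card

lemma mono_le_iff {n : ℕ} {g : Fin n → ℝ} (hg : Monotone g) (t : ℝ) (i : Fin n) :
    g i ≤ t ↔ (i:ℕ) < (Finset.univ.filter fun j => g j ≤ t).card := by
  constructor
  · intro h
    have hsub : Finset.Iic i ⊆ Finset.univ.filter fun j => g j ≤ t := by
      intro j hj
      simp only [Finset.mem_Iic] at hj
      exact Finset.mem_filter.2 ⟨Finset.mem_univ _, le_trans (hg hj) h⟩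
    have := Finset.card_le_card hsub
    rw [Fin.card_Iic] at this
    omega
  · intro h
    by_contra hlt
    push_neg at hlt
    have hsub : (Finset.univ.filter fun j => g j ≤ t) ⊆ Finset.Iio i := by
      intro j hj
      simp only [Finset.mem_filter] at hj
      simp only [Finset.mem_Iio]
      by_contra hij
      push_neg at hij
      exact absurd (le_trans (hg hij) hj.2) (not_le.2 hlt)
    have := Finset.card_le_card hsub
    rw [Fin.card_Iio] at this
    omega

lemma sorted_le_iff {n : ℕ} (ξ : Fin n → ℝ) (t : ℝ) (i : Fin n) :
    sortedVec ξ i ≤ t ↔ (i:ℕ) < Kcnt t ξ := by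
  have hmono := Tuple.monotone_sort ξ
  have h := mono_le_iff (g := ξ ∘ ⇑(Tuple.sort ξ)) hmono t i
  have hcard : (Finset.univ.filter fun j => (ξ ∘ ⇑(Tuple.sort ξ)) j ≤ t).card
      = Kcnt t ξ := by
    unfold Kcnt
    apply Finset.card_bij (fun j _ => Tuple.sort ξ j)
    · intro j hj
      simp only [Finset.mem_filter, Function.comp] at hj ⊢
      exact ⟨Finset.mem_univ _, hj.2⟩
    · intro a ha b hb hab
      exact (Tuple.sort ξ).injective hab
    · intro j hj
      refine ⟨(Tuple.sort ξ).symm j, ?_, by simp⟩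
      simp only [Finset.mem_filter, Function.comp] at hj ⊢
      simpa using hj.2
  rw [← hcard]
  exact h

lemma Qmat_eq {n : ℕ} (m ρ : ℝ) (ξ : Fin n → ℝ) (i j : Fin n) :
    Qmat n (Wm m) ρ ξ i j = thv ρ (Kcnt (1/2 + m) ξ) i j := by
  unfold Qmat thv Wm
  simp only [Matrix.of_apply]
  congr 1
  have hcond : ((sortedVec ξ i ≤ 1/2 + m ∧ sortedVec ξ j ≤ 1/2 + m) ∨
      (1/2 + m < sortedVec ξ i ∧ 1/2 + m < sortedVec ξ j))
      ↔ (((i:ℕ) < Kcnt (1/2+m) ξ) ↔ ((j:ℕ) < Kcnt (1/2+m) ξ)) := by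
    rw [← sorted_le_iff ξ (1/2+m) i, ← sorted_le_iff ξ (1/2+m) j]
    constructor
    · rintro (⟨h1, h2⟩ | ⟨h1, h2⟩)
      · simp only [h1, h2]
      · simp only [not_le.2 h1, not_le.2 h2]
    · intro h
      by_cases hi : sortedVec ξ i ≤ 1/2 + m
      · exact Or.inl ⟨hi, h.1 hi⟩
      · push_neg at hi
        refine Or.inr ⟨hi, ?_⟩
        by_contra hj
        push_neg at hj
        exact absurd (h.2 hj) (not_le.2 hi)
  simp only [hcond]

noncomputable def Fb {n : ℕ} (b : PairIdx n → Bool) : Fin n → Fin n → ℝ := fun i j =>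
  if h : i < j then (if b ⟨(i, j), h⟩ then 1 else 0)
  else if h : j < i then (if b ⟨(j, i), h⟩ then 1 else 0) else 0

lemma Fb_injective {n : ℕ} : Function.Injective (Fb (n := n)) := by
  intro b b' h
  funext p
  have := congrFun (congrFun h p.1.1) p.1.2
  simp only [Fb, dif_pos p.2] at this
  by_cases hb : b p <;> by_cases hb' : b' p <;> simp [hb, hb'] at this ⊢ <;> norm_num at this

lemma Amat_eq_Fb {n : ℕ} (m ρ : ℝ) (ω : (Fin n → ℝ) × (Fin n → Fin n → ℝ)) :
    (fun i j => Amat n (Wm m) ρ ω i j) =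
      Fb (fun p => decide (ω.2 p.1.1 p.1.2 ≤ thv ρ (Kcnt (1/2 + m) ω.1) p.1.1 p.1.2)) := by
  funext i j
  unfold Amat Fb
  simp only [Matrix.of_apply, Qmat_eq]
  rcases lt_trichotomy i j with h | h | h
  · rw [if_neg (ne_of_lt h), if_pos h, dif_pos h]
    by_cases hc : ω.2 i j ≤ thv ρ (Kcnt (1/2 + m) ω.1) i j <;> simp [hc]
  · subst h
    rw [if_pos rfl, dif_neg (lt_irrefl i), dif_neg (lt_irrefl i)]
  · rw [if_neg (ne_of_gt h), if_neg (not_lt.2 h.le), dif_neg (not_lt.2 h.le), dif_pos h]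
    by_cases hc : ω.2 j i ≤ thv ρ (Kcnt (1/2 + m) ω.1) j i <;> simp [hc]

-- ### measure-theoretic layer

lemma unif01_univ : unif01 Set.univ = 1 := by
  simp [unif01, Real.volume_Icc]

instance : IsProbabilityMeasure unif01 := ⟨unif01_univ⟩

lemma unif01_Iic {x : ℝ} (h0 : 0 ≤ x) (h1 : x ≤ 1) :
    unif01 (Set.Iic x) = ENNReal.ofReal x := by
  rw [unif01, Measure.restrict_apply measurableSet_Iic]
  have : Set.Iic x ∩ Set.Icc 0 1 = Set.Icc 0 x := by
    ext y
    simp only [Set.mem_inter_iff, Set.mem_Iic, Set.mem_Icc]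
    constructor
    · rintro ⟨h, h2, h3⟩; exact ⟨h2, h⟩
    · rintro ⟨h2, h⟩; exact ⟨h, h2, le_trans h h1⟩
  rw [this, Real.volume_Icc]
  norm_num

lemma unif01_Ioi {x : ℝ} (h0 : 0 ≤ x) (h1 : x ≤ 1) :
    unif01 (Set.Ioi x) = ENNReal.ofReal (1 - x) := by
  rw [unif01, Measure.restrict_apply measurableSet_Ioi]
  have : Set.Ioi x ∩ Set.Icc 0 1 = Set.Ioc x 1 := by
    ext y
    simp only [Set.mem_inter_iff, Set.mem_Ioi, Set.mem_Icc, Set.mem_Ioc]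
    constructor
    · rintro ⟨h, h2, h3⟩; exact ⟨h, h3⟩
    · rintro ⟨h, h3⟩; exact ⟨h, le_trans h0 h.le, h3⟩
  rw [this, Real.volume_Ioc]

noncomputable def PU (n : ℕ) : Measure (Fin n → Fin n → ℝ) :=
  Measure.pi fun _ : Fin n => Measure.pi fun _ : Fin n => unif01

instance (n : ℕ) : IsProbabilityMeasure (PU n) := by
  unfold PU; infer_instance

instance (n : ℕ) : IsProbabilityMeasure (Pxi n) := by
  unfold Pxi; infer_instance

lemma Pg_eq (n : ℕ) : Pg n = (Pxi n).prod (PU n) := rfl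

noncomputable def wgt {n : ℕ} (t : ℝ) (s : Finset (Fin n)) : ℝ :=
  t ^ s.card * (1 - t) ^ (n - s.card)

noncomputable def bern (θ : ℝ) (x : Bool) : ℝ := if x then θ else 1 - θ

noncomputable def gfun {n : ℕ} (ρ : ℝ) (k : ℕ) (b : PairIdx n → Bool) : ℝ :=
  ∏ p : PairIdx n, bern (thv ρ k p.1.1 p.1.2) (b p)

lemma thv_pos {n : ℕ} {ρ : ℝ} (hρ : 0 < ρ) (k : ℕ) (i j : Fin n) : 0 < thv ρ k i j := by
  unfold thv; split <;> positivity

lemma thv_le {n : ℕ} {ρ : ℝ} (hρ1 : ρ ≤ 1) (hρ0 : 0 < ρ) (k : ℕ) (i j : Fin n) :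
    thv ρ k i j ≤ 3/4 := by
  unfold thv; split <;> nlinarith

lemma bern_pos {θ : ℝ} (h0 : 0 < θ) (h1 : θ ≤ 3/4) (x : Bool) : 0 < bern θ x := by
  unfold bern; split <;> linarith

lemma bern_le_one {θ : ℝ} (h0 : 0 < θ) (h1 : θ ≤ 3/4) (x : Bool) : bern θ x ≤ 1 := by
  unfold bern; split <;> linarith

lemma gfun_pos {n : ℕ} {ρ : ℝ} (hρ : ρ ∈ Set.Ioc (0:ℝ) 1) (k : ℕ) (b : PairIdx n → Bool) :
    0 < gfun ρ k b :=
  Finset.prod_pos fun p _ => bern_pos (thv_pos hρ.1 _ _ _) (thv_le hρ.2 hρ.1 _ _ _) _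

lemma wgt_pos {n : ℕ} {t : ℝ} (h0 : 0 < t) (h1 : t < 1) (s : Finset (Fin n)) : 0 < wgt t s := by
  unfold wgt; exact mul_pos (pow_pos h0 _) (pow_pos (by linarith) _)

-- the component sets
noncomputable def XiS {n : ℕ} (t : ℝ) (s : Finset (Fin n)) : Set (Fin n → ℝ) :=
  Set.pi Set.univ fun i => if i ∈ s then Set.Iic t else Set.Ioi t

noncomputable def VS {n : ℕ} (ρ : ℝ) (k : ℕ) (b : PairIdx n → Bool) :
    Set (Fin n → Fin n → ℝ) :=
  Set.pi Set.univ fun i => Set.pi Set.univ fun j =>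
    if h : i < j then
      (if b ⟨(i, j), h⟩ then Set.Iic (thv ρ k i j) else Set.Ioi (thv ρ k i j))
    else Set.univ

lemma mem_XiS {n : ℕ} {t : ℝ} {s : Finset (Fin n)} {ξ : Fin n → ℝ} :
    ξ ∈ XiS t s ↔ ∀ i, ξ i ≤ t ↔ i ∈ s := by
  unfold XiS
  simp only [Set.mem_pi, Set.mem_univ, true_implies]
  constructor
  · intro h i
    by_cases hi : i ∈ s
    · have := h i; rw [if_pos hi] at this; exact ⟨fun _ => hi, fun _ => this⟩
    · have := h i; rw [if_neg hi] at this
      exact ⟨fun hle => absurd hle (not_le.2 this), fun hmem => absurd hmem hi⟩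
  · intro h i
    by_cases hi : i ∈ s
    · rw [if_pos hi]; exact (h i).2 hi
    · rw [if_neg hi]; exact not_le.1 fun hle => hi ((h i).1 hle)

lemma mem_VS {n : ℕ} {ρ : ℝ} {k : ℕ} {b : PairIdx n → Bool} {u : Fin n → Fin n → ℝ} :
    u ∈ VS ρ k b ↔
      ∀ p : PairIdx n, (u p.1.1 p.1.2 ≤ thv ρ k p.1.1 p.1.2 ↔ b p = true) := by
  unfold VS
  simp only [Set.mem_pi, Set.mem_univ, true_implies]
  constructor
  · rintro h ⟨⟨i, j⟩, hij⟩
    have := h i j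
    rw [dif_pos hij] at this
    by_cases hb : b ⟨(i, j), hij⟩
    · rw [if_pos hb] at this
      simpa [hb] using this
    · rw [if_neg hb] at this
      simp only [Set.mem_Ioi] at this
      simp [hb, not_le.2 this]
  · intro h i j
    by_cases hij : i < j
    · rw [dif_pos hij]
      have := h ⟨(i, j), hij⟩
      by_cases hb : b ⟨(i, j), hij⟩
      · rw [if_pos hb]; exact this.2 hb
      · rw [if_neg hb]
        simp only [Set.mem_Ioi]
        by_contra hle
        push_neg at hle
        exact hb (this.1 hle)
    · rw [dif_neg hij]; trivial

lemma meas_XiS {n : ℕ} (t : ℝ) (s : Finset (Fin n)) : MeasurableSet (XiS t s) :=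
  MeasurableSet.univ_pi fun i => by
    by_cases hi : i ∈ s
    · rw [if_pos hi]; exact measurableSet_Iic
    · rw [if_neg hi]; exact measurableSet_Ioi

lemma meas_VS {n : ℕ} (ρ : ℝ) (k : ℕ) (b : PairIdx n → Bool) : MeasurableSet (VS ρ k b) :=
  MeasurableSet.univ_pi fun i => MeasurableSet.univ_pi fun j => by
    by_cases hij : i < j
    · rw [dif_pos hij]
      by_cases hb : b ⟨(i, j), hij⟩
      · rw [if_pos hb]; exact measurableSet_Iic
      · rw [if_neg hb]; exact measurableSet_Ioi
    · rw [dif_neg hij]; exact MeasurableSet.univ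

lemma Pxi_XiS {n : ℕ} {t : ℝ} (h0 : 0 ≤ t) (h1 : t ≤ 1) (s : Finset (Fin n)) :
    Pxi n (XiS t s) = ENNReal.ofReal (wgt t s) := by
  unfold Pxi XiS
  rw [Measure.pi_pi]
  have hval : ∀ i : Fin n, unif01 (if i ∈ s then Set.Iic t else Set.Ioi t)
      = if i ∈ s then ENNReal.ofReal t else ENNReal.ofReal (1 - t) := by
    intro i
    by_cases hi : i ∈ s
    · rw [if_pos hi, if_pos hi, unif01_Iic h0 h1]
    · rw [if_neg hi, if_neg hi, unif01_Ioi h0 h1]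
  rw [Finset.prod_congr rfl fun i _ => hval i, Finset.prod_ite, Finset.prod_const,
    Finset.prod_const, Finset.filter_univ_mem]
  have hcompl : Finset.univ.filter (fun i => i ∉ s) = sᶜ := by
    ext i; simp
  rw [hcompl, Finset.card_compl]
  simp only [Fintype.card_fin]
  rw [← ENNReal.ofReal_pow h0, ← ENNReal.ofReal_pow (by linarith), ← ENNReal.ofReal_mul
    (pow_nonneg h0 _)]
  rfl

lemma prod_prod_pairs {n : ℕ} {M : Type*} [CommMonoid M] (f : Fin n → Fin n → M)
    (h1 : ∀ i j, ¬i < j → f i j = 1) :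
    (∏ i, ∏ j, f i j) = ∏ p : PairIdx n, f p.1.1 p.1.2 := by
  rw [← Finset.prod_product']
  rw [← Finset.prod_filter_mul_prod_filter_not (Finset.univ ×ˢ Finset.univ)
    (fun p => p.1 < p.2)]
  have h2 : (∏ x ∈ (Finset.univ ×ˢ Finset.univ).filter (fun p => ¬p.1 < p.2), f x.1 x.2)
      = 1 := Finset.prod_eq_one fun x hx => h1 _ _ (Finset.mem_filter.1 hx).2
  rw [h2, mul_one]
  exact Finset.prod_subtype _ (fun x => by simp) _

lemma PU_VS {n : ℕ} {ρ : ℝ} (hρ : ρ ∈ Set.Ioc (0:ℝ) 1) (k : ℕ) (b : PairIdx n → Bool) :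
    PU n (VS ρ k b) = ENNReal.ofReal (gfun ρ k b) := by
  have hθ0 : ∀ i j : Fin n, 0 ≤ thv ρ k i j := fun i j => (thv_pos hρ.1 k i j).le
  have hθ1 : ∀ i j : Fin n, thv ρ k i j ≤ 1 :=
    fun i j => le_trans (thv_le hρ.2 hρ.1 k i j) (by norm_num)
  unfold PU VS
  rw [Measure.pi_pi]
  have hinner : ∀ i : Fin n,
      (Measure.pi fun _ : Fin n => unif01) (Set.pi Set.univ fun j =>
        if h : i < j then
          (if b ⟨(i, j), h⟩ then Set.Iic (thv ρ k i j) else Set.Ioi (thv ρ k i j))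
        else Set.univ)
      = ∏ j, (if h : i < j then ENNReal.ofReal (bern (thv ρ k i j) (b ⟨(i, j), h⟩))
          else 1) := by
    intro i
    rw [Measure.pi_pi]
    refine Finset.prod_congr rfl fun j _ => ?_
    by_cases hij : i < j
    · rw [dif_pos hij, dif_pos hij]
      by_cases hb : b ⟨(i, j), hij⟩
      · rw [if_pos hb, unif01_Iic (hθ0 i j) (hθ1 i j)]
        unfold bern; rw [if_pos hb]
      · rw [if_neg hb, unif01_Ioi (hθ0 i j) (hθ1 i j)]
        unfold bern; rw [if_neg hb]
    · rw [dif_neg hij, dif_neg hij]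
      exact measure_univ
  rw [Finset.prod_congr rfl fun i _ => hinner i]
  rw [prod_prod_pairs (fun i j => if h : i < j then
      ENNReal.ofReal (bern (thv ρ k i j) (b ⟨(i, j), h⟩)) else 1)
    (fun i j h => dif_neg h)]
  unfold gfun
  rw [ENNReal.ofReal_prod_of_nonneg fun p _ =>
    (bern_pos (thv_pos hρ.1 _ _ _) (thv_le hρ.2 hρ.1 _ _ _) _).le]
  refine Finset.prod_congr rfl fun p _ => ?_
  obtain ⟨⟨i, j⟩, hij⟩ := p
  rw [dif_pos hij]

-- ### measurability and the atom computation

lemma meas_Kcnt {n : ℕ} (t : ℝ) : Measurable (Kcnt t : (Fin n → ℝ) → ℕ) := by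
  unfold Kcnt
  simp_rw [Finset.card_filter]
  exact Finset.measurable_sum _ fun i _ =>
    Measurable.ite (measurableSet_le (measurable_pi_apply i) measurable_const)
      measurable_const measurable_const

lemma meas_Amap {n : ℕ} (m ρ : ℝ) :
    Measurable (fun ω => fun i j : Fin n => Amat n (Wm m) ρ ω i j) := by
  have heq : (fun ω => fun i j : Fin n => Amat n (Wm m) ρ ω i j)
      = fun ω : (Fin n → ℝ) × (Fin n → Fin n → ℝ) =>
        Fb (fun p : PairIdx n =>
          decide (ω.2 p.1.1 p.1.2 ≤ thv ρ (Kcnt (1/2 + m) ω.1) p.1.1 p.1.2)) := by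
    funext ω
    exact Amat_eq_Fb m ρ ω
  rw [heq]
  apply measurable_pi_lambda
  intro i
  apply measurable_pi_lambda
  intro j
  have key : ∀ i' j' : Fin n,
      Measurable (fun ω : (Fin n → ℝ) × (Fin n → Fin n → ℝ) =>
        if ω.2 i' j' ≤ thv ρ (Kcnt (1/2 + m) ω.1) i' j' then (1:ℝ) else 0) := by
    intro i' j'
    apply Measurable.ite _ measurable_const measurable_const
    have hset : {ω : (Fin n → ℝ) × (Fin n → Fin n → ℝ) |
        ω.2 i' j' ≤ thv ρ (Kcnt (1/2 + m) ω.1) i' j'}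
        = ⋃ k : ℕ, ((fun ω : (Fin n → ℝ) × (Fin n → Fin n → ℝ) =>
            Kcnt (1/2 + m) ω.1) ⁻¹' {k}) ∩
            {ω : (Fin n → ℝ) × (Fin n → Fin n → ℝ) | ω.2 i' j' ≤ thv ρ k i' j'} := by
      ext ω
      simp only [Set.mem_setOf_eq, Set.mem_iUnion, Set.mem_inter_iff, Set.mem_preimage,
        Set.mem_singleton_iff]
      constructor
      · intro h; exact ⟨Kcnt (1/2 + m) ω.1, rfl, h⟩
      · rintro ⟨k, hk, h⟩; rw [hk]; exact h
    rw [hset]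
    refine MeasurableSet.iUnion fun k => MeasurableSet.inter ?_ ?_
    · exact ((meas_Kcnt (1/2 + m)).comp measurable_fst) (measurableSet_singleton k)
    · exact measurableSet_le
        ((measurable_pi_apply j').comp ((measurable_pi_apply i').comp measurable_snd))
        measurable_const
  unfold Fb
  by_cases hij : i < j
  · simp only [dif_pos hij, decide_eq_true_eq]
    exact key i j
  · by_cases hji : j < i
    · simp only [dif_neg hij, dif_pos hji, decide_eq_true_eq]
      exact key j i
    · simp only [dif_neg hij, dif_neg hji]
      exact measurable_const

lemma preimage_eq {n : ℕ} (m ρ : ℝ) (b : PairIdx n → Bool) :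
    ((fun ω => fun i j : Fin n => Amat n (Wm m) ρ ω i j) ⁻¹' {Fb b})
      = ⋃ s : Finset (Fin n), (XiS (1/2 + m) s) ×ˢ (VS ρ s.card b) := by
  ext ω
  simp only [Set.mem_preimage, Set.mem_singleton_iff, Set.mem_iUnion, Set.mem_prod]
  rw [Amat_eq_Fb m ρ ω]
  constructor
  · intro h
    have hb := Fb_injective h
    refine ⟨Finset.univ.filter (fun i => ω.1 i ≤ 1/2 + m), ?_, ?_⟩
    · rw [mem_XiS]
      intro i
      simp [Finset.mem_filter]
    · rw [mem_VS]
      intro p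
      have hK : Kcnt (1/2 + m) ω.1
          = (Finset.univ.filter (fun i => ω.1 i ≤ 1/2 + m)).card := rfl
      have := congrFun hb p
      rw [← this, ← hK]
      simp [decide_eq_true_eq]
  · rintro ⟨s, hξ, hu⟩
    have hK : Kcnt (1/2 + m) ω.1 = s.card := by
      unfold Kcnt
      congr 1
      ext i
      simp only [Finset.mem_filter, Finset.mem_univ, true_and]
      exact mem_XiS.1 hξ i
    suffices hbb : (fun p : PairIdx n =>
        decide (ω.2 p.1.1 p.1.2 ≤ thv ρ (Kcnt (1/2 + m) ω.1) p.1.1 p.1.2)) = b by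
      rw [hbb]
    funext p
    rw [hK]
    have := (mem_VS.1 hu) p
    by_cases hb : b p
    · simp [hb, decide_eq_true_eq, this.2 hb]
    · simp only [hb, decide_eq_false_iff_not]
      intro hle
      exact hb (this.1 hle)

lemma atom {n : ℕ} {m ρ : ℝ} (hρ : ρ ∈ Set.Ioc (0:ℝ) 1) (hm0 : 0 ≤ m) (hm1 : m < 1/2)
    (b : PairIdx n → Bool) :
    Measure.map (fun ω => fun i j : Fin n => Amat n (Wm m) ρ ω i j) (Pg n) {Fb b}
      = ENNReal.ofReal (∑ s : Finset (Fin n), wgt (1/2 + m) s * gfun ρ s.card b) := by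
  have ht0 : (0:ℝ) ≤ 1/2 + m := by linarith
  have ht1 : (1:ℝ)/2 + m ≤ 1 := by linarith
  rw [Measure.map_apply (meas_Amap m ρ) (measurableSet_singleton _), preimage_eq m ρ b]
  rw [measure_iUnion ?_ ?_]
  · rw [tsum_fintype]
    rw [ENNReal.ofReal_sum_of_nonneg fun s _ =>
      mul_nonneg (wgt_pos (by linarith) (by linarith) s).le (gfun_pos hρ _ b).le]
    refine Finset.sum_congr rfl fun s _ => ?_
    rw [Pg_eq, Measure.prod_prod, Pxi_XiS ht0 ht1 s, PU_VS hρ s.card b,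
      ← ENNReal.ofReal_mul (wgt_pos (by linarith) (by linarith) s).le]
  · intro s s' hss
    rw [Function.onFun, Set.disjoint_left]
    rintro ω ⟨h1, _⟩ ⟨h1', _⟩
    apply hss
    ext i
    rw [← mem_XiS.1 h1 i, mem_XiS.1 h1' i]
  · exact fun s => (meas_XiS _ s).prod (meas_VS ρ s.card b)

lemma atom_zero {n : ℕ} (m ρ : ℝ) (a : Fin n → Fin n → ℝ) (ha : a ∉ Set.range (Fb (n := n))) :
    Measure.map (fun ω => fun i j : Fin n => Amat n (Wm m) ρ ω i j) (Pg n) {a} = 0 := by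
  rw [Measure.map_apply (meas_Amap m ρ) (measurableSet_singleton _)]
  have hemp : ((fun ω => fun i j : Fin n => Amat n (Wm m) ρ ω i j) ⁻¹' {a})
      = (∅ : Set ((Fin n → ℝ) × (Fin n → Fin n → ℝ))) := by
    ext ω
    simp only [Set.mem_preimage, Set.mem_singleton_iff, Set.mem_empty_iff_false, iff_false]
    intro h
    exact ha ⟨_, (Amat_eq_Fb m ρ ω ▸ h :)⟩
  rw [hemp, measure_empty]

-- ### combinatorial sum identities

lemma sum_gfun {n : ℕ} (ρ : ℝ) (k : ℕ) :
    (∑ b : PairIdx n → Bool, gfun ρ k b) = 1 := by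
  have h := Finset.prod_univ_sum (fun _ : PairIdx n => (Finset.univ : Finset Bool))
    (fun p x => bern (thv ρ k p.1.1 p.1.2) x)
  have h1 : ∀ p : PairIdx n, (∑ x : Bool, bern (thv ρ k p.1.1 p.1.2) x) = 1 := by
    intro p
    rw [Fintype.sum_bool]
    unfold bern
    norm_num
  rw [Finset.prod_congr rfl fun p _ => h1 p, Finset.prod_const_one] at h
  rw [Fintype.piFinset_univ] at h
  exact h.symm

lemma sum_wgt {n : ℕ} (t : ℝ) : (∑ s : Finset (Fin n), wgt t s) = 1 := by
  have h1 : (∏ _j : Fin n, (t + (1 - t))) = 1 := by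
    simp
  rw [Finset.prod_add, Finset.powerset_univ] at h1
  rw [← h1]
  refine Finset.sum_congr rfl fun s _ => ?_
  rw [Finset.prod_const, Finset.prod_const, ← Finset.compl_eq_univ_sdiff,
    Finset.card_compl, Fintype.card_fin]
  rfl

lemma sum_wgt_mem {n : ℕ} (t : ℝ) (i : Fin n) :
    (∑ s : Finset (Fin n), if i ∈ s then wgt t s else 0) = t := by
  have h1 : (∏ j : Fin n, ((fun _ : Fin n => t) j
      + (fun j : Fin n => if j = i then 0 else 1 - t) j)) = t := by
    rw [Finset.prod_eq_single i]
    · simp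
    · intro j _ hj
      simp only [if_neg hj]
      ring
    · intro hi
      exact absurd (Finset.mem_univ i) hi
  rw [Finset.prod_add, Finset.powerset_univ] at h1
  conv_rhs => rw [← h1]
  refine Finset.sum_congr rfl fun s _ => ?_
  by_cases hi : i ∈ s
  · rw [if_pos hi]
    have h2 : (∏ j ∈ Finset.univ \ s, (if j = i then (0:ℝ) else 1 - t))
        = ∏ _j ∈ Finset.univ \ s, (1 - t) := by
      refine Finset.prod_congr rfl fun j hj => ?_
      rw [if_neg]
      intro hji
      rw [hji] at hj
      exact (Finset.mem_sdiff.1 hj).2 hi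
    rw [h2, Finset.prod_const, Finset.prod_const, ← Finset.compl_eq_univ_sdiff,
      Finset.card_compl, Fintype.card_fin]
    rfl
  · rw [if_neg hi]
    have h2 : (∏ j ∈ Finset.univ \ s, (if j = i then (0:ℝ) else 1 - t)) = 0 :=
      Finset.prod_eq_zero (Finset.mem_sdiff.2 ⟨Finset.mem_univ i, hi⟩) (if_pos rfl)
    rw [h2, mul_zero]

lemma sum_wgt_card {n : ℕ} (t : ℝ) :
    (∑ s : Finset (Fin n), wgt t s * s.card) = n * t := by
  have h1 : ∀ s : Finset (Fin n), wgt t s * s.card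
      = ∑ i : Fin n, (if i ∈ s then wgt t s else 0) := by
    intro s
    rw [Finset.sum_ite_mem, Finset.univ_inter, Finset.sum_const, nsmul_eq_mul, mul_comm]
  rw [Finset.sum_congr rfl fun s _ => h1 s, Finset.sum_comm]
  rw [Finset.sum_congr rfl fun i _ => sum_wgt_mem t i]
  rw [Finset.sum_const, Finset.card_univ, Fintype.card_fin, nsmul_eq_mul]

-- ### log-sum inequality

lemma logsum {ι : Type*} [Fintype ι] [Nonempty ι] (x y : ι → ℝ)
    (hx : ∀ i, 0 < x i) (hy : ∀ i, 0 < y i) :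
    (∑ i, x i) * Real.log ((∑ i, x i) / (∑ i, y i)) ≤ ∑ i, x i * Real.log (x i / y i) := by
  set X := ∑ i, x i with hX
  set Y := ∑ i, y i with hY
  have hX0 : 0 < X := Finset.sum_pos (fun i _ => hx i) Finset.univ_nonempty
  have hY0 : 0 < Y := Finset.sum_pos (fun i _ => hy i) Finset.univ_nonempty
  have key : ∀ i, x i * Real.log (X / Y) - x i * Real.log (x i / y i)
      ≤ (X / Y) * y i - x i := by
    intro i
    have h1 : Real.log (X / Y) - Real.log (x i / y i)
        = Real.log ((X / Y) * (y i / x i)) := by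
      rw [Real.log_mul (div_pos hX0 hY0).ne' (div_pos (hy i) (hx i)).ne',
        Real.log_div (hy i).ne' (hx i).ne', Real.log_div hX0.ne' hY0.ne',
        Real.log_div (hx i).ne' (hy i).ne']
      ring
    have h2 : Real.log ((X / Y) * (y i / x i)) ≤ (X / Y) * (y i / x i) - 1 :=
      Real.log_le_sub_one_of_pos (mul_pos (div_pos hX0 hY0) (div_pos (hy i) (hx i)))
    calc x i * Real.log (X / Y) - x i * Real.log (x i / y i)
        = x i * (Real.log (X / Y) - Real.log (x i / y i)) := by ring
      _ = x i * Real.log ((X / Y) * (y i / x i)) := by rw [h1]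
      _ ≤ x i * ((X / Y) * (y i / x i) - 1) :=
          mul_le_mul_of_nonneg_left h2 (hx i).le
      _ = (X / Y) * y i - x i := by
          rw [mul_sub, mul_one,
            show x i * (X / Y * (y i / x i)) = X / Y * (y i / x i * x i) by ring,
            div_mul_cancel₀ _ (hx i).ne']
  have hsum := Finset.sum_le_sum (fun i (_ : i ∈ Finset.univ) => key i)
  rw [Finset.sum_sub_distrib, Finset.sum_sub_distrib, ← Finset.sum_mul,
    ← Finset.mul_sum] at hsum
  rw [← hX, ← hY] at hsum
  have hXY : X / Y * Y = X := by field_simp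
  rw [hXY] at hsum
  have : X * Real.log (X / Y) = (∑ i, x i * Real.log (X / Y)) := by
    rw [← Finset.sum_mul]
  linarith [hsum, this]

-- ### final numeric computation

lemma final_sum {n : ℕ} {Δ : ℝ} (hΔ0 : 0 < Δ) (hΔ1 : Δ < 1/2) :
    (∑ s : Finset (Fin n), wgt (1/2 + Δ) s
        * Real.log (wgt (1/2 + Δ) s / wgt ((1:ℝ)/2) s))
      ≤ 4 * n * Δ ^ 2 := by
  set t : ℝ := 1/2 + Δ with ht
  have ht0 : 0 < t := by rw [ht]; linarith
  have ht1 : t < 1 := by rw [ht]; linarith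
  have hlog : ∀ s : Finset (Fin n), Real.log (wgt t s / wgt ((1:ℝ)/2) s)
      = (s.card : ℝ) * Real.log (2 * t)
        + ((n : ℝ) - s.card) * Real.log (2 * (1 - t)) := by
    intro s
    have hcle : s.card ≤ n := by
      have := Finset.card_le_univ s
      simpa [Finset.card_univ] using this
    have hratio : wgt t s / wgt ((1:ℝ)/2) s
        = (2 * t) ^ s.card * (2 * (1 - t)) ^ (n - s.card) := by
      unfold wgt
      rw [div_eq_iff (by positivity), mul_pow, mul_pow,
        show (1:ℝ) - 1/2 = 1/2 by norm_num]
      have key : ∀ c : ℕ, ((2:ℝ)) ^ c * ((1:ℝ)/2) ^ c = 1 := fun c => by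
        rw [← mul_pow]; norm_num
      calc t ^ s.card * (1 - t) ^ (n - s.card)
          = ((2:ℝ) ^ s.card * ((1:ℝ)/2) ^ s.card)
            * (((2:ℝ) ^ (n - s.card) * ((1:ℝ)/2) ^ (n - s.card))
              * (t ^ s.card * (1 - t) ^ (n - s.card))) := by rw [key, key]; ring
        _ = (2:ℝ) ^ s.card * t ^ s.card * ((2:ℝ) ^ (n - s.card) * (1 - t) ^ (n - s.card))
            * (((1:ℝ)/2) ^ s.card * ((1:ℝ)/2) ^ (n - s.card)) := by ring
    rw [hratio, Real.log_mul (pow_pos (by linarith : (0:ℝ) < 2 * t) _).ne'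
      (pow_pos (by linarith : (0:ℝ) < 2 * (1 - t)) _).ne', Real.log_pow, Real.log_pow]
    rw [Nat.cast_sub hcle]
  rw [Finset.sum_congr rfl fun s _ => by rw [hlog s]]
  have hsplit : (∑ s : Finset (Fin n), wgt t s * ((s.card : ℝ) * Real.log (2 * t)
        + ((n : ℝ) - s.card) * Real.log (2 * (1 - t))))
      = (n * t) * Real.log (2 * t) + (n * (1 - t)) * Real.log (2 * (1 - t)) := by
    have e : ∀ s : Finset (Fin n), wgt t s * ((s.card : ℝ) * Real.log (2 * t)
          + ((n : ℝ) - s.card) * Real.log (2 * (1 - t)))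
        = (wgt t s * s.card) * Real.log (2 * t)
          + (wgt t s * n - wgt t s * s.card) * Real.log (2 * (1 - t)) := by
      intro s; ring
    rw [Finset.sum_congr rfl fun s _ => e s, Finset.sum_add_distrib, ← Finset.sum_mul,
      ← Finset.sum_mul, Finset.sum_sub_distrib, ← Finset.sum_mul, sum_wgt_card, sum_wgt]
    ring
  rw [hsplit]
  have h2t : 2 * t = 1 + 2 * Δ := by rw [ht]; ring
  have h2t' : 2 * (1 - t) = 1 - 2 * Δ := by rw [ht]; ring
  have hb1 : Real.log (2 * t) ≤ 2 * Δ := by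
    rw [h2t]
    have := Real.log_le_sub_one_of_pos (show (0:ℝ) < 1 + 2 * Δ by linarith)
    linarith
  have hb2 : Real.log (2 * (1 - t)) ≤ -(2 * Δ) := by
    rw [h2t']
    have := Real.log_le_sub_one_of_pos (show (0:ℝ) < 1 - 2 * Δ by linarith)
    linarith
  have hnt0 : (0:ℝ) ≤ n * t := by positivity
  have hnt1 : (0:ℝ) ≤ n * (1 - t) := by
    have : (0:ℝ) ≤ (n:ℝ) := Nat.cast_nonneg n
    nlinarith
  have e1 : (n:ℝ) * t * Real.log (2 * t) ≤ n * t * (2 * Δ) :=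
    mul_le_mul_of_nonneg_left hb1 hnt0
  have e2 : (n:ℝ) * (1 - t) * Real.log (2 * (1 - t)) ≤ n * (1 - t) * (-(2 * Δ)) :=
    mul_le_mul_of_nonneg_left hb2 hnt1
  have : (n:ℝ) * t * (2 * Δ) + n * (1 - t) * (-(2 * Δ)) = 4 * n * Δ ^ 2 := by
    rw [ht]; ring
  linarith

/-- the KL divergence between the laws of the adjacency matrices sampled from
`W_Δ` and from `W_0` (with sparsity `ρ`) is at most `16 n Δ²`. -/
theorem stmt8 (n : ℕ) (hn : 1 ≤ n) (ρ : ℝ) (hρ : ρ ∈ Set.Ioc (0:ℝ) 1)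
    (Δ : ℝ) (hΔ : Δ ∈ Set.Ioo (0:ℝ) (1/2)) :
    KLfin (Measure.map (fun ω => fun i j : Fin n => Amat n (Wm Δ) ρ ω i j) (Pg n))
        (Measure.map (fun ω => fun i j : Fin n => Amat n (Wm 0) ρ ω i j) (Pg n)) ≤
      16 * n * Δ ^ 2 := by
  classical
  have hΔ0 := hΔ.1
  have hΔ1 := hΔ.2
  have hatomΔ := fun b : PairIdx n → Bool => atom (m := Δ) hρ hΔ0.le hΔ1 b
  have hatom0 := fun b : PairIdx n → Bool =>
    atom (m := 0) hρ le_rfl (by norm_num) b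
  have hwpos : ∀ (m : ℝ), 0 ≤ m → m < 1/2 → ∀ b : PairIdx n → Bool,
      0 < ∑ s : Finset (Fin n), wgt (1/2 + m) s * gfun ρ s.card b := by
    intro m h0 h1 b
    exact Finset.sum_pos (fun s _ =>
      mul_pos (wgt_pos (by linarith) (by linarith) s) (gfun_pos hρ _ b))
      Finset.univ_nonempty
  rw [KLfin, tsum_eq_sum (s := Finset.image (Fb (n := n)) Finset.univ) ?_]
  swap
  · intro a ha
    have har : a ∉ Set.range (Fb (n := n)) := by
      simp only [Finset.mem_image, Finset.mem_univ, true_and] at ha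
      rintro ⟨b, hb⟩
      exact ha ⟨b, hb⟩
    rw [atom_zero Δ ρ a har]
    simp
  rw [Finset.sum_image (fun b _ b' _ h => Fb_injective h)]
  have hterm : ∀ b : PairIdx n → Bool,
      ((Measure.map (fun ω => fun i j : Fin n => Amat n (Wm Δ) ρ ω i j) (Pg n))
          {Fb b}).toReal
        * Real.log (((Measure.map (fun ω => fun i j : Fin n => Amat n (Wm Δ) ρ ω i j)
            (Pg n)) {Fb b}).toReal
          / ((Measure.map (fun ω => fun i j : Fin n => Amat n (Wm 0) ρ ω i j)
            (Pg n)) {Fb b}).toReal)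
      = (∑ s : Finset (Fin n), wgt (1/2 + Δ) s * gfun ρ s.card b)
        * Real.log ((∑ s : Finset (Fin n), wgt (1/2 + Δ) s * gfun ρ s.card b)
          / (∑ s : Finset (Fin n), wgt (1/2 + 0) s * gfun ρ s.card b)) := by
    intro b
    rw [hatomΔ b, hatom0 b,
      ENNReal.toReal_ofReal (hwpos Δ hΔ0.le hΔ1 b).le,
      ENNReal.toReal_ofReal (hwpos 0 le_rfl (by norm_num) b).le]
  rw [Finset.sum_congr rfl fun b _ => hterm b]
  have hb : ∀ b : PairIdx n → Bool,
      (∑ s : Finset (Fin n), wgt (1/2 + Δ) s * gfun ρ s.card b)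
        * Real.log ((∑ s : Finset (Fin n), wgt (1/2 + Δ) s * gfun ρ s.card b)
          / (∑ s : Finset (Fin n), wgt (1/2 + 0) s * gfun ρ s.card b))
      ≤ ∑ s : Finset (Fin n), (wgt (1/2 + Δ) s * gfun ρ s.card b)
          * Real.log (wgt (1/2 + Δ) s / wgt ((1:ℝ)/2 + 0) s) := by
    intro b
    have hls := logsum (ι := Finset (Fin n))
      (fun s => wgt (1/2 + Δ) s * gfun ρ s.card b)
      (fun s => wgt (1/2 + 0) s * gfun ρ s.card b)
      (fun s => mul_pos (wgt_pos (by linarith) (by linarith) s) (gfun_pos hρ _ b))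
      (fun s => mul_pos (wgt_pos (by norm_num) (by norm_num) s) (gfun_pos hρ _ b))
    refine le_trans hls (le_of_eq (Finset.sum_congr rfl fun s _ => ?_))
    rw [mul_div_mul_right _ _ (gfun_pos hρ s.card b).ne']
  refine le_trans (Finset.sum_le_sum fun b _ => hb b) ?_
  rw [Finset.sum_comm]
  have hswap : ∀ s : Finset (Fin n),
      (∑ b : PairIdx n → Bool, (wgt (1/2 + Δ) s * gfun ρ s.card b)
          * Real.log (wgt (1/2 + Δ) s / wgt ((1:ℝ)/2 + 0) s))
      = wgt (1/2 + Δ) s * Real.log (wgt (1/2 + Δ) s / wgt ((1:ℝ)/2 + 0) s) := by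
    intro s
    have : ∀ b : PairIdx n → Bool, (wgt (1/2 + Δ) s * gfun ρ s.card b)
          * Real.log (wgt (1/2 + Δ) s / wgt ((1:ℝ)/2 + 0) s)
        = (wgt (1/2 + Δ) s * Real.log (wgt (1/2 + Δ) s / wgt ((1:ℝ)/2 + 0) s))
          * gfun ρ s.card b := by
      intro b; ring
    rw [Finset.sum_congr rfl fun b _ => this b, ← Finset.mul_sum, sum_gfun, mul_one]
  rw [Finset.sum_congr rfl fun s _ => hswap s]
  have hhalf : ((1:ℝ)/2 + 0) = (1:ℝ)/2 := by norm_num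
  rw [hhalf]
  refine le_trans (final_sum hΔ0 hΔ1) ?_
  nlinarith [mul_nonneg (Nat.cast_nonneg n : (0:ℝ) ≤ n) (sq_nonneg Δ)]
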